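/- Let 1 ≤ k ≤ n-1 and S(x) := x^{n-k} R(x) with R a real polynomial of degree at most k. Then |S(x)| ≤ x^{(n-k)/2} · ‖S‖_{[0,1]} for all x ∈ [0, 1 - 10k/(n-k)]. -/

import Mathlib

open Polynomial Set Finset

lemma aux_fact (k : ℕ) : (k:ℝ)^k ≤ (k.factorial : ℝ) * Real.exp k := by
  induction k with
  | zero => simp
  | succ k ih =>
    rcases Nat.eq_zero_or_pos k with h | h
    · subst h; simpa using (by nlinarith [Real.add_one_le_exp (1:ℝ)] : (1:ℝ) ≤ Real.exp 1)
    have hk : (0:ℝ) < k := by exact_mod_cast h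
    have h1 : (1 + 1/(k:ℝ))^k ≤ Real.exp 1 := by
      have := Real.add_one_le_exp (1/(k:ℝ))
      calc (1 + 1/(k:ℝ))^k ≤ (Real.exp (1/k))^k := by
            apply pow_le_pow_left₀ (by positivity); linarith
        _ = Real.exp 1 := by
            rw [← Real.exp_nat_mul]; congr 1; field_simp
    have key : ((k:ℝ)+1)^k ≤ (k:ℝ)^k * Real.exp 1 := by
      have : ((k:ℝ)+1)^k = (k:ℝ)^k * (1 + 1/(k:ℝ))^k := by
        rw [← mul_pow]; congr 1; field_simp
      rw [this]
      exact mul_le_mul_of_nonneg_left h1 (by positivity)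
    have hf : (0:ℝ) ≤ (k.factorial : ℝ) := by positivity
    have hek : (0:ℝ) < Real.exp k := Real.exp_pos _
    have e1 : (0:ℝ) < Real.exp 1 := Real.exp_pos 1
    push_cast
    calc ((k:ℝ)+1)^(k+1) = ((k:ℝ)+1) * ((k:ℝ)+1)^k := by ring
      _ ≤ ((k:ℝ)+1) * ((k:ℝ)^k * Real.exp 1) := by nlinarith
      _ ≤ ((k:ℝ)+1) * (((k.factorial : ℝ) * Real.exp k) * Real.exp 1) := by
          have : (k:ℝ)^k * Real.exp 1 ≤ ((k.factorial : ℝ) * Real.exp k) * Real.exp 1 := by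
            nlinarith
          nlinarith
      _ = (((k:ℝ)+1) * (k.factorial:ℝ)) * Real.exp ((k:ℝ)+1) := by
          rw [Real.exp_add]; ring
      _ = ((k+1).factorial : ℝ) * Real.exp ((k:ℝ)+1) := by
          congr 1; push_cast [Nat.factorial_succ]; ring

lemma aux_exp : Real.exp (10/9) ≤ 16/5 := by
  have h9 : Real.exp (10/9) ^ (9:ℕ) = Real.exp 10 := by
    rw [← Real.exp_nat_mul]; norm_num
  have h10 : Real.exp 10 = Real.exp 1 ^ (10:ℕ) := by
    rw [← Real.exp_nat_mul]; norm_num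
  have he : Real.exp 1 < 2.7182818286 := Real.exp_one_lt_d9
  have hb : Real.exp 10 ≤ (16/5:ℝ)^(9:ℕ) := by
    rw [h10]
    calc Real.exp 1 ^ (10:ℕ) ≤ (2.7182818286:ℝ)^(10:ℕ) := by
          apply pow_le_pow_left₀ (Real.exp_pos 1).le he.le
      _ ≤ (16/5:ℝ)^(9:ℕ) := by norm_num
  have := (pow_le_pow_iff_left₀ (Real.exp_pos (10/9)).le
    (by norm_num : (0:ℝ) ≤ 16/5) (by norm_num : (9:ℕ) ≠ 0)).mp (by rw [h9]; exact hb)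
  exact this

lemma aux_growth {s : ℝ} (hs : 10 ≤ s) : 12 * s ≤ Real.exp (s/2) := by
  have h5 : (148:ℝ) ≤ Real.exp 5 := by
    have : Real.exp 5 = Real.exp 1 ^ (5:ℕ) := by rw [← Real.exp_nat_mul]; norm_num
    rw [this]
    calc (148:ℝ) ≤ (2.7182818283:ℝ)^(5:ℕ) := by norm_num
      _ ≤ Real.exp 1 ^ (5:ℕ) := pow_le_pow_left₀ (by norm_num) Real.exp_one_gt_d9.le 5
  have hsplit : Real.exp (s/2) = Real.exp 5 * Real.exp ((s-10)/2) := by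
    rw [← Real.exp_add]; ring_nf
  have h2 : 1 + (s-10)/2 ≤ Real.exp ((s-10)/2) := by
    have := Real.add_one_le_exp ((s-10)/2); linarith
  rw [hsplit]
  nlinarith [Real.exp_pos ((s-10)/2)]

lemma aux_node {m i : ℕ} (hm : 0 < m) (him : 10 * i ≤ m) :
    (5/16:ℝ)^i ≤ (1 - (i:ℝ)/m)^m := by
  have hm' : (0:ℝ) < m := by exact_mod_cast hm
  have ht : (i:ℝ)/m ≤ 1/10 := by
    rw [div_le_iff₀ hm']
    have : (10:ℝ) * i ≤ m := by exact_mod_cast him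
    linarith
  have ht0 : (0:ℝ) ≤ (i:ℝ)/m := by positivity
  set t : ℝ := (i:ℝ)/m with hts
  have h1t : (0:ℝ) < 1 - t := by linarith
  have key : Real.exp (-(t / (1 - t))) ≤ 1 - t := by
    have h2 : (1-t)⁻¹ ≤ Real.exp (t/(1-t)) := by
      have he : (1-t)⁻¹ = t/(1-t) + 1 := by field_simp; ring
      rw [he]; exact Real.add_one_le_exp _
    rw [Real.exp_neg, inv_le_comm₀ (Real.exp_pos _) h1t]
    exact h2
  have hmt : (m:ℝ) * t = i := by rw [hts]; field_simp
  calc (5/16:ℝ)^i ≤ ((Real.exp (10/9))⁻¹)^i := by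
        apply pow_le_pow_left₀ (by norm_num)
        rw [le_inv_comm₀ (by norm_num) (Real.exp_pos _)]
        calc Real.exp (10/9) ≤ 16/5 := aux_exp
          _ = (5/16:ℝ)⁻¹ := by norm_num
    _ = Real.exp (-(10/9) * i) := by
        rw [← Real.exp_neg, ← Real.exp_nat_mul]; congr 1; ring
    _ ≤ Real.exp ((m:ℕ) * (-(t/(1-t)))) := by
        apply Real.exp_le_exp.mpr
        have hfrac : (m:ℝ) * (t/(1-t)) ≤ 10/9 * i := by
          rw [← mul_div_assoc, hmt, div_le_iff₀ h1t]
          nlinarith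
        nlinarith
    _ = (Real.exp (-(t/(1-t))))^m := by rw [← Real.exp_nat_mul]
    _ ≤ (1 - t)^m := pow_le_pow_left₀ (Real.exp_pos _).le key m

lemma aux_prodA (i : ℕ) : ∏ j ∈ range i, ((i:ℝ) - j) = i.factorial := by
  rw [← Finset.prod_range_reflect]
  rw [← Finset.prod_range_add_one_eq_factorial i, Nat.cast_prod]
  apply Finset.prod_congr rfl
  intro j hj
  rw [Finset.mem_range] at hj
  rw [show i - 1 - j = i - (j+1) from by omega, Nat.cast_sub (by omega)]
  push_cast
  ring

lemma aux_prodB {i k : ℕ} (hik : i ≤ k) :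
    ∏ j ∈ Ico (i+1) (k+1), ((j:ℝ) - i) = (k-i).factorial := by
  rw [Finset.prod_Ico_eq_prod_range]
  have h2 : k + 1 - (i+1) = k - i := by omega
  rw [h2, ← Finset.prod_range_add_one_eq_factorial (k-i), Nat.cast_prod]
  apply Finset.prod_congr rfl
  intro j hj
  push_cast
  ring

lemma aux_erase {i k : ℕ} (hik : i ≤ k) :
    (range (k+1)).erase i = range i ∪ Ico (i+1) (k+1) := by
  ext j
  simp only [Finset.mem_erase, Finset.mem_range, Finset.mem_union, Finset.mem_Ico]
  omega

lemma aux_denom {i k : ℕ} (hik : i ≤ k) :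
    ∏ j ∈ (range (k+1)).erase i, |(i:ℝ) - j| = (i.factorial * (k-i).factorial : ℕ) := by
  rw [aux_erase hik, Finset.prod_union]
  · rw [show (∏ j ∈ range i, |(i:ℝ) - j|) = ∏ j ∈ range i, ((i:ℝ) - j) from
      Finset.prod_congr rfl fun j hj => abs_of_pos (by
        rw [Finset.mem_range] at hj
        have : (j:ℝ) < i := by exact_mod_cast hj
        linarith)]
    rw [show (∏ j ∈ Ico (i+1) (k+1), |(i:ℝ) - j|) = ∏ j ∈ Ico (i+1) (k+1), ((j:ℝ) - i) from
      Finset.prod_congr rfl fun j hj => by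
        rw [Finset.mem_Ico] at hj
        rw [abs_sub_comm]
        exact abs_of_pos (by
          have : (i:ℝ) < j := by exact_mod_cast hj.1
          linarith)]
    rw [aux_prodA, aux_prodB hik]
    push_cast
    ring
  · rw [Finset.disjoint_left]
    intro a ha ha'
    rw [Finset.mem_range] at ha
    rw [Finset.mem_Ico] at ha'
    omega

lemma aux_basis {m k i : ℕ} (hm : 0 < m) (hik : i ≤ k) {x : ℝ}
    (hxv : ∀ j : ℕ, j ≤ k → x ≤ 1 - (j:ℝ)/m) :
    |(Lagrange.basis (range (k+1)) (fun j : ℕ => 1 - (j:ℝ)/m) i).eval x| ≤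
      (1-x)^k * m^k / (i.factorial * (k-i).factorial) := by
  have hm' : (0:ℝ) < m := by exact_mod_cast hm
  have hfac : (0:ℝ) < (i.factorial : ℝ) * (k-i).factorial := by positivity
  set v : ℕ → ℝ := fun j : ℕ => 1 - (j:ℝ)/m with hv
  have hmem : i ∈ range (k+1) := by simp [Nat.lt_succ_iff.mpr hik]
  have hcard : ((range (k+1)).erase i).card = k := by
    rw [Finset.card_erase_of_mem hmem, Finset.card_range]; omega
  rw [Lagrange.basis, Polynomial.eval_prod, Finset.abs_prod]
  have heval : ∀ j ∈ (range (k+1)).erase i,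
      |(Lagrange.basisDivisor (v i) (v j)).eval x| = |v i - v j|⁻¹ * |x - v j| := by
    intro j hj
    rw [Lagrange.basisDivisor]
    simp [abs_mul, abs_inv]
  rw [Finset.prod_congr rfl heval, Finset.prod_mul_distrib]
  have hstep : ∀ j : ℕ, |v i - v j| = |(i:ℝ) - j| * (m:ℝ)⁻¹ := by
    intro j
    rw [hv]
    simp only []
    rw [show (1 - (i:ℝ)/m) - (1 - (j:ℝ)/m) = ((j:ℝ) - i)/m by ring, abs_div,
      abs_of_pos hm', abs_sub_comm, div_eq_mul_inv]
  have hP1 : ∏ j ∈ (range (k+1)).erase i, |v i - v j|⁻¹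
      = (m:ℝ)^k / (i.factorial * (k-i).factorial) := by
    rw [Finset.prod_inv_distrib, Finset.prod_congr rfl fun j _ => hstep j,
      Finset.prod_mul_distrib, Finset.prod_const, hcard, aux_denom hik]
    rw [inv_eq_one_div, div_eq_div_iff (by positivity) (by positivity)]
    push_cast
    field_simp
    rw [← mul_pow, mul_one_div_cancel hm'.ne', one_pow]
  have hP2 : ∏ j ∈ (range (k+1)).erase i, |x - v j| ≤ (1-x)^k := by
    calc ∏ j ∈ (range (k+1)).erase i, |x - v j|
        ≤ ∏ j ∈ (range (k+1)).erase i, (1-x) := by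
          apply Finset.prod_le_prod (fun j _ => abs_nonneg _)
          intro j hj
          have hjk : j ≤ k := by
            have := Finset.mem_of_mem_erase hj
            rw [Finset.mem_range] at this; omega
          have h1 : x ≤ v j := hxv j hjk
          have h2 : v j ≤ 1 := by
            rw [hv]; simp only []
            have : (0:ℝ) ≤ (j:ℝ)/m := by positivity
            linarith
          rw [abs_sub_comm, abs_of_nonneg (by linarith)]
          linarith
      _ = (1-x)^k := by rw [Finset.prod_const, hcard]
  rw [hP1]
  calc (m:ℝ)^k / (i.factorial * (k-i).factorial) * ∏ j ∈ (range (k+1)).erase i, |x - v j|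
      ≤ (m:ℝ)^k / (i.factorial * (k-i).factorial) * (1-x)^k := by
        apply mul_le_mul_of_nonneg_left hP2 (by positivity)
    _ = (1-x)^k * m^k / (i.factorial * (k-i).factorial) := by ring

lemma aux_sum (k : ℕ) :
    ∑ i ∈ range (k+1), (16/5:ℝ)^i / (i.factorial * (k-i).factorial)
      = (21/5)^k / k.factorial := by
  have h : ((16:ℝ)/5 + 1)^k = ∑ i ∈ range (k+1), (16/5:ℝ)^i * 1^(k-i) * (k.choose i) :=
    add_pow (16/5:ℝ) 1 k
  have h2 : ∀ i ∈ range (k+1), (16/5:ℝ)^i / (i.factorial * (k-i).factorial)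
      = (16/5:ℝ)^i * 1^(k-i) * (k.choose i) / k.factorial := by
    intro i hi
    rw [Finset.mem_range] at hi
    have hik : i ≤ k := by omega
    have hcf' : ((k.choose i):ℝ) * i.factorial * (k-i).factorial = k.factorial := by
      exact_mod_cast Nat.choose_mul_factorial_mul_factorial hik
    rw [one_pow, div_eq_div_iff (by positivity) (by positivity), ← hcf']
    ring
  rw [Finset.sum_congr rfl h2, ← Finset.sum_div, ← h]
  norm_num

set_option maxHeartbeats 1000000 in
theorem incomplete_decay (n k : ℕ) (hk : 1 ≤ k) (hkn : k ≤ n - 1) (hn : 1 ≤ n)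
    (R : Polynomial ℝ) (hR : R.natDegree ≤ k) :
    ∀ x ∈ Icc (0:ℝ) (1 - 10 * (k:ℝ) / ((n:ℝ) - (k:ℝ))),
      |((X ^ (n - k) * R : Polynomial ℝ)).eval x| ≤
        x ^ (((n:ℝ) - (k:ℝ)) / 2) *
          ⨆ u : Icc (0:ℝ) 1, |((X ^ (n - k) * R : Polynomial ℝ)).eval (u : ℝ)| := by
  intro x hx
  obtain ⟨hx0, hx1⟩ := hx
  have hkn' : k < n := by omega
  set m := n - k with hmdef
  have hm1 : 1 ≤ m := by omega
  have hm0 : 0 < m := hm1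
  have hm' : (0:ℝ) < m := by exact_mod_cast hm0
  have hcastm : (n:ℝ) - (k:ℝ) = (m:ℝ) := by
    rw [hmdef, Nat.cast_sub hkn'.le]
  rw [hcastm] at hx1 ⊢
  clear_value m
  set S := (X ^ m * R : Polynomial ℝ) with hS
  set M := ⨆ u : Icc (0:ℝ) 1, |S.eval (u:ℝ)| with hMdef
  have hbdd : BddAbove (Set.range fun u : Icc (0:ℝ) 1 => |S.eval (u:ℝ)|) := by
    have hc : ContinuousOn (fun t : ℝ => |S.eval t|) (Icc 0 1) :=
      (continuous_abs.comp (Polynomial.continuous S)).continuousOn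
    have := isCompact_Icc.bddAbove_image hc
    rwa [Set.image_eq_range] at this
  have hM : ∀ t : ℝ, t ∈ Icc (0:ℝ) 1 → |S.eval t| ≤ M := by
    intro t ht
    rw [hMdef]
    exact le_ciSup hbdd ⟨t, ht⟩
  clear_value S M
  have hM0 : 0 ≤ M := le_trans (abs_nonneg _) (hM 0 ⟨le_refl 0, zero_le_one⟩)
  have hk' : (0:ℝ) < k := by exact_mod_cast hk
  have h10R : 10 * (k:ℝ) ≤ m := by
    have h := le_trans hx0 hx1
    have := (div_le_one hm').mp (by linarith)
    linarith
  have h10 : 10 * k ≤ m := by exact_mod_cast h10R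
  set v : ℕ → ℝ := fun j : ℕ => 1 - (j:ℝ)/m with hv
  have hxv : ∀ j : ℕ, j ≤ k → x ≤ v j := by
    intro j hj
    have hjk : (j:ℝ) ≤ 10*k := by
      have : (j:ℝ) ≤ k := by exact_mod_cast hj
      linarith
    have hdiv : (j:ℝ)/m ≤ 10*(k:ℝ)/m := by gcongr
    simp only [hv]
    linarith
  have hvmem : ∀ j : ℕ, j ≤ k → v j ∈ Icc (0:ℝ) 1 := by
    intro j hj
    have hj10 : (j:ℝ) ≤ 10*k := by
      have : (j:ℝ) ≤ k := by exact_mod_cast hj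
      linarith
    have hj' : (j:ℝ)/m ≤ 1 := by
      rw [div_le_one hm']
      linarith
    have h0j : (0:ℝ) ≤ (j:ℝ)/m := by positivity
    constructor
    · simp only [hv]; linarith
    · simp only [hv]; linarith
  have hnode : ∀ i : ℕ, i ≤ k → |R.eval (v i)| ≤ (16/5)^i * M := by
    intro i hik
    have h10i : 10 * i ≤ m := by omega
    have hlow : (5/16:ℝ)^i ≤ (v i)^m := aux_node hm0 h10i
    have hvi0 : (0:ℝ) ≤ v i := (hvmem i hik).1
    have hSv : (v i)^m * |R.eval (v i)| = |S.eval (v i)| := by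
      rw [hS]
      simp [Polynomial.eval_mul, Polynomial.eval_pow, abs_mul, abs_pow, abs_of_nonneg hvi0]
    have h1 : (v i)^m * |R.eval (v i)| ≤ M := by rw [hSv]; exact hM _ (hvmem i hik)
    have h2 : (5/16:ℝ)^i * |R.eval (v i)| ≤ M := by
      nlinarith [abs_nonneg (R.eval (v i))]
    have h3 := mul_le_mul_of_nonneg_left h2
      (le_of_lt (pow_pos (by norm_num : (0:ℝ) < 16/5) i))
    rw [← mul_assoc, show ((16:ℝ)/5)^i * (5/16)^i = 1 by rw [← mul_pow]; norm_num,
      one_mul] at h3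
    linarith
  have hinj : Set.InjOn v (range (k+1) : Finset ℕ) := by
    intro a _ b _ hab
    simp only [hv] at hab
    have h1 : (a:ℝ)/m = (b:ℝ)/m := by linarith
    field_simp at h1
    exact_mod_cast h1
  have hdeg : R.degree < (range (k+1)).card := by
    rw [Finset.card_range]
    calc R.degree ≤ (R.natDegree : WithBot ℕ) := Polynomial.degree_le_natDegree
      _ ≤ (k : WithBot ℕ) := by exact_mod_cast hR
      _ < ((k+1 : ℕ) : WithBot ℕ) := by exact_mod_cast Nat.lt_succ_self k
  have hRint : R.eval x = ∑ i ∈ range (k+1),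
      R.eval (v i) * (Lagrange.basis (range (k+1)) v i).eval x := by
    conv_lhs => rw [Lagrange.eq_interpolate hinj hdeg]
    rw [Lagrange.interpolate_apply, Polynomial.eval_finset_sum]
    apply Finset.sum_congr rfl
    intro i _
    rw [Polynomial.eval_mul, Polynomial.eval_C]
  set D : ℝ := (1-x)^k * m^k * (21/5)^k / k.factorial with hD
  clear_value D
  have hRx : |R.eval x| ≤ M * D := by
    rw [hRint]
    calc |∑ i ∈ range (k+1), R.eval (v i) * (Lagrange.basis (range (k+1)) v i).eval x|
        ≤ ∑ i ∈ range (k+1), |R.eval (v i) * (Lagrange.basis (range (k+1)) v i).eval x| :=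
          Finset.abs_sum_le_sum_abs _ _
      _ ≤ ∑ i ∈ range (k+1),
            ((16/5)^i * M) * ((1-x)^k * m^k / (i.factorial * (k-i).factorial)) := by
          apply Finset.sum_le_sum
          intro i hi
          rw [Finset.mem_range] at hi
          have hik : i ≤ k := by omega
          rw [abs_mul]
          apply mul_le_mul (hnode i hik) (aux_basis hm0 hik hxv) (abs_nonneg _)
          positivity
      _ = ∑ i ∈ range (k+1),
            (M * ((1-x)^k * m^k)) * ((16/5:ℝ)^i / (i.factorial * (k-i).factorial)) :=
          Finset.sum_congr rfl fun i _ => by ring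
      _ = M * D := by
          rw [← Finset.mul_sum, aux_sum k, hD]; ring
  -- final estimate
  have hSx : |S.eval x| = x^m * |R.eval x| := by
    rw [hS]
    simp [Polynomial.eval_mul, Polynomial.eval_pow, abs_mul, abs_pow, abs_of_nonneg hx0]
  set u : ℝ := 1 - x with hu
  have hu1 : 10*(k:ℝ)/m ≤ u := by rw [hu]; linarith
  have hu0 : (0:ℝ) < u := lt_of_lt_of_le (by positivity) hu1
  set s : ℝ := u * m / k with hsdef
  have hs : 10 ≤ s := by
    rw [hsdef, le_div_iff₀ hk']
    rw [div_le_iff₀ hm'] at hu1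
    linarith
  have hs0 : (0:ℝ) < s := by positivity
  have hsk : s * k = u * m := by rw [hsdef]; field_simp
  clear_value u s
  have hxexp : x ≤ Real.exp (-u) := by
    have h := Real.add_one_le_exp (-u)
    have hxu : x = 1 - u := by rw [hu]; ring
    linarith
  have hhalf : (0:ℝ) ≤ (m:ℝ)/2 := by positivity
  have hxr : x ^ ((m:ℝ)/2) ≤ (Real.exp (-s/2))^k := by
    calc x ^ ((m:ℝ)/2) ≤ (Real.exp (-u)) ^ ((m:ℝ)/2) := Real.rpow_le_rpow hx0 hxexp hhalf
      _ = Real.exp (-u * ((m:ℝ)/2)) := by rw [← Real.exp_mul]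
      _ = Real.exp ((k:ℝ) * (-s/2)) := by
          congr 1
          linear_combination ((1:ℝ)/2) * hsk
      _ = (Real.exp (-s/2))^k := by rw [← Real.exp_nat_mul]
  have hkfac : (0:ℝ) < k.factorial := by positivity
  have he1 : Real.exp 1 ≤ 2.7182818286 := Real.exp_one_lt_d9.le
  have he1p : (0:ℝ) < Real.exp 1 := Real.exp_pos 1
  have hD12 : D ≤ (12*s)^k := by
    rw [hD, div_le_iff₀ hkfac]
    have hexpk : Real.exp (k:ℝ) = (Real.exp 1)^k := by
      rw [← Real.exp_nat_mul]; congr 1; ring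
    have hfk : (k:ℝ)^k ≤ (k.factorial : ℝ) * (Real.exp 1)^k := by
      rw [← hexpk]; exact aux_fact k
    have h1 : u^k * (m:ℝ)^k * (21/5)^k = ((21/5)*s)^k * (k:ℝ)^k := by
      rw [← mul_pow, ← mul_pow, ← mul_pow]
      congr 1
      linear_combination (-(21:ℝ)/5) * hsk
    rw [h1]
    calc ((21/5)*s)^k * (k:ℝ)^k
        ≤ ((21/5)*s)^k * ((k.factorial : ℝ) * (Real.exp 1)^k) := by
          apply mul_le_mul_of_nonneg_left hfk (by positivity)
      _ = (((21/5)*s) * Real.exp 1)^k * (k.factorial : ℝ) := by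
          rw [mul_pow]; ring
      _ ≤ (12*s)^k * (k.factorial : ℝ) := by
          apply mul_le_mul_of_nonneg_right ?_ (le_of_lt hkfac)
          apply pow_le_pow_left₀ (by positivity)
          have hh := mul_le_mul_of_nonneg_right he1 hs0.le
          nlinarith [hh]
  have hD0 : (0:ℝ) ≤ D := by
    rw [hD]
    have : (0:ℝ) ≤ 1 - x := by linarith
    positivity
  have hfinal1 : x ^ ((m:ℝ)/2) * D ≤ 1 := by
    have hx2 : (0:ℝ) ≤ x ^ ((m:ℝ)/2) := Real.rpow_nonneg hx0 _
    calc x ^ ((m:ℝ)/2) * D ≤ (Real.exp (-s/2))^k * (12*s)^k := by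
          apply mul_le_mul hxr hD12 hD0 (by positivity)
      _ = (Real.exp (-s/2) * (12*s))^k := by rw [← mul_pow]
      _ ≤ 1^k := by
          apply pow_le_pow_left₀ (by positivity)
          have hg := aux_growth hs
          have hinv : Real.exp (-s/2) = (Real.exp (s/2))⁻¹ := by
            rw [← Real.exp_neg]; congr 1; ring
          rw [hinv, inv_mul_le_iff₀ (Real.exp_pos _), mul_one]
          exact hg
      _ = 1 := one_pow k
  have hxm : x^m = x ^ ((m:ℝ)/2) * x ^ ((m:ℝ)/2) := by
    have h := Real.rpow_add' (y := (m:ℝ)/2) (z := (m:ℝ)/2) hx0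
      (ne_of_gt (by linarith : (0:ℝ) < (m:ℝ)/2 + (m:ℝ)/2))
    rw [show (m:ℝ)/2 + (m:ℝ)/2 = ((m:ℕ):ℝ) from by push_cast; ring] at h
    rw [← Real.rpow_natCast x m, h]
  have hx2 : (0:ℝ) ≤ x ^ ((m:ℝ)/2) := Real.rpow_nonneg hx0 _
  calc |S.eval x| = x^m * |R.eval x| := hSx
    _ ≤ x^m * (M * D) := mul_le_mul_of_nonneg_left hRx (by positivity)
    _ = x ^ ((m:ℝ)/2) * ((x ^ ((m:ℝ)/2) * D) * M) := by rw [hxm]; ring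
    _ ≤ x ^ ((m:ℝ)/2) * (1 * M) := by
        apply mul_le_mul_of_nonneg_left ?_ hx2
        apply mul_le_mul_of_nonneg_right hfinal1 hM0
    _ = x ^ ((m:ℝ)/2) * M := by ring
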